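/- Let N > n, Δ ⊆ S_{n,N}, σ : Δ → ℝ, and take β = 1 and the quadratic Hamiltonian H(φ) = ½∑_{x∈Λ_{n,N}} φ_x². For η : Λ_{n,N} ∪ Δ → ℕ define D(φ, η) = ∏_{y∈Δ} σ(y)^{η_y} · ∏_{x∈Λ_{n,N}} h_{η_x}(φ_x). Let 𝓛 = ∑_{unordered nearest-neighbor pairs {x,y} ⊆ Λ_{n,N}} 𝓛_{x,y} + ∑_{x∈Λ_{n,N}} ∑_{y∈Δ, y∼x} 𝓛̄_{x,y}, where 𝓛_{x,y}f(η) = η_x(f(η^{x,y}) − f(η)) + η_y(f(η^{y,x}) − f(η)), 𝓛̄_{x,y}f(η) = η_x(f(η^{x,y}) − f(η)), and η^{x,y} denotes η with one particle moved from site x to site y. Then for every φ ∈ ℝ^{Λ_{n,N}} and every η, (L D(·, η))(φ) = (𝓛 D(φ, ·))(η). -/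

import Mathlib

open Finset

/-- A point of the `d = k+1` dimensional lattice `ℤ^d`, written as
(first coordinate, remaining `k` coordinates). -/
abbrev Pt (k : ℕ) := ℤ × (Fin k → ℤ)

/-- Nearest neighbors: `|x - y| = 1` (ℓ¹-distance one). -/
def isNN {k : ℕ} (x y : Pt k) : Prop :=
  |x.1 - y.1| + ∑ i, |x.2 i - y.2 i| = 1

instance {k : ℕ} (x y : Pt k) : Decidable (isNN x y) := by
  unfold isNN; infer_instance

/-- The domain 𝒞 = {x₁ ≥ n} ∪ {x₁ ≤ -n} ∪ C_n. -/
def inC (k n : ℕ) (x : Pt k) : Prop :=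
  (n : ℤ) ≤ x.1 ∨ x.1 ≤ -(n : ℤ) ∨ (|x.1| ≤ (n : ℤ) ∧ ∀ i, |x.2 i| ≤ (n : ℤ))

instance (k n : ℕ) : DecidablePred (inC k n) := fun x => by
  unfold inC; infer_instance

/-- The `2(k+1)` nearest neighbors of `x` in `ℤ^{k+1}`. -/
def nbrFinset {k : ℕ} (x : Pt k) : Finset (Pt k) :=
  {(x.1 + 1, x.2), (x.1 - 1, x.2)} ∪
    (Finset.univ : Finset (Fin k × Bool)).image
      (fun p => (x.1, Function.update x.2 p.1 (x.2 p.1 + if p.2 then 1 else -1)))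

/-- ψ is harmonic on 𝒞: for every x ∈ 𝒞, the sum of ψ(y) − ψ(x) over
nearest neighbors y of x lying in 𝒞 vanishes. -/
def HarmonicOnC (k n : ℕ) (ψ : Pt k → ℝ) : Prop :=
  ∀ x : Pt k, inC k n x →
    ∑ y ∈ (nbrFinset x).filter (fun y => inC k n y), (ψ y - ψ x) = 0

/-- The flux through the section Σ_ξ of the channel. -/
noncomputable def flux (k n : ℕ) (ψ : Pt k → ℝ) (ξ : ℤ) : ℝ :=
  ∑ v ∈ Fintype.piFinset (fun _ : Fin k => Finset.Icc (-(n : ℤ)) (n : ℤ)),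
    (ψ (ξ - 1, v) - ψ (ξ, v))

/-- The finite volume Λ_{n,N} = 𝒞 ∩ [−N, N]^d, as a finite set. -/
noncomputable def Lam (k n N : ℕ) : Finset (Pt k) :=
  ((Finset.Icc (-(N : ℤ)) (N : ℤ)) ×ˢ
      Fintype.piFinset (fun _ : Fin k => Finset.Icc (-(N : ℤ)) (N : ℤ))).filter
    (inC k n)

/-- The shell S_{n,N} = Λ_{n,N+1} \ Λ_{n,N}. -/
noncomputable def Sshell (k n N : ℕ) : Finset (Pt k) := Lam k n (N + 1) \ Lam k n N

/-- `u` is harmonic in Λ_{n,N} with boundary condition σ on Δ: it agrees with σ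
on Δ and for every x ∈ Λ_{n,N},
∑_{y ∈ Λ, y∼x} (u x − u y) + ∑_{y ∈ Δ, y∼x} (u x − σ y) = 0. -/
def HarmBC (k n N : ℕ) (Δ : Finset (Pt k)) (σ : Pt k → ℝ) (u : Pt k → ℝ) : Prop :=
  (∀ y ∈ Δ, u y = σ y) ∧
  ∀ x ∈ Lam k n N,
    (∑ y ∈ (Lam k n N).filter (fun y => isNN x y), (u x - u y)) +
      (∑ y ∈ Δ.filter (fun y => isNN x y), (u x - σ y)) = 0

open MeasureTheory

/-- Partial derivative ∂f/∂φ_x of a function of finitely many real variables. -/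
noncomputable def pd {ι : Type*} [Fintype ι] [DecidableEq ι]
    (f : (ι → ℝ) → ℝ) (x : ι) (φ : ι → ℝ) : ℝ :=
  fderiv ℝ f φ (Pi.single x 1)

/-- The bond operator
L_{x,y} f = −(∂H/∂φ_x − ∂H/∂φ_y)(∂f/∂φ_x − ∂f/∂φ_y) + β⁻¹(∂/∂φ_x − ∂/∂φ_y)² f. -/
noncomputable def Lxy {ι : Type*} [Fintype ι] [DecidableEq ι] (β : ℝ)
    (H : (ι → ℝ) → ℝ) (x y : ι) (f : (ι → ℝ) → ℝ) (φ : ι → ℝ) : ℝ :=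
  -((pd H x φ - pd H y φ) * (pd f x φ - pd f y φ)) +
    β⁻¹ * (pd (pd f x) x φ - pd (pd f x) y φ - pd (pd f y) x φ + pd (pd f y) y φ)

/-- The boundary operator
L̄_{x} f = −(∂H/∂φ_x − s) ∂f/∂φ_x + β⁻¹ ∂²f/∂φ_x², with chemical potential s. -/
noncomputable def Lbar {ι : Type*} [Fintype ι] [DecidableEq ι] (β : ℝ)
    (H : (ι → ℝ) → ℝ) (x : ι) (s : ℝ) (f : (ι → ℝ) → ℝ) (φ : ι → ℝ) : ℝ :=
  -((pd H x φ - s) * pd f x φ) + β⁻¹ * pd (pd f x) x φ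

/-- The full generator L = ∑_{{x,y}⊆Λ, x∼y} L_{x,y} + ∑_{x∈Λ}∑_{y∈Δ, y∼x} L̄_{x,y},
the first (unordered-pair) sum realized as half the ordered double sum, the
summand being symmetric in (x,y). -/
noncomputable def Gen (k n N : ℕ) (β : ℝ) (Δ : Finset (Pt k)) (σ : Pt k → ℝ)
    (H : (↥(Lam k n N) → ℝ) → ℝ) (f : (↥(Lam k n N) → ℝ) → ℝ)
    (φ : ↥(Lam k n N) → ℝ) : ℝ :=
  (1 / 2) * (∑ x : ↥(Lam k n N), ∑ y : ↥(Lam k n N),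
      if isNN (x : Pt k) (y : Pt k) then Lxy β H x y f φ else 0) +
    ∑ x : ↥(Lam k n N), ∑ y ∈ Δ.filter (fun y => isNN (x : Pt k) y),
      Lbar β H x (σ y) f φ

open Polynomial

/-- The probabilist's Hermite polynomial h_m, evaluated at ξ ∈ ℝ. -/
noncomputable def Her (m : ℕ) (ξ : ℝ) : ℝ := aeval ξ (hermite m)

/-- The duality function
D(φ,η) = ∏_{y∈Δ} σ(y)^{η_y} · ∏_{x∈Λ_{n,N}} h_{η_x}(φ_x). -/
noncomputable def Dfun (k n N : ℕ) (Δ : Finset (Pt k)) (σ : Pt k → ℝ)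
    (φ : ↥(Lam k n N) → ℝ) (η : Pt k → ℕ) : ℝ :=
  (∏ y ∈ Δ, σ y ^ η y) * ∏ x : ↥(Lam k n N), Her (η x) (φ x)

/-- η with one particle moved from site x to site y. -/
def move {k : ℕ} (η : Pt k → ℕ) (x y : Pt k) : Pt k → ℕ := fun z =>
  if z = y then η y + 1 else if z = x then η x - 1 else η z

/-- The dual generator
𝓛 = ∑_{{x,y}⊆Λ, x∼y} 𝓛_{x,y} + ∑_{x∈Λ}∑_{y∈Δ, y∼x} 𝓛̄_{x,y} acting on
η ↦ D(φ,η), with 𝓛_{x,y}f(η) = η_x(f(η^{x,y})−f(η)) + η_y(f(η^{y,x})−f(η))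
and 𝓛̄_{x,y}f(η) = η_x(f(η^{x,y})−f(η)); the unordered-pair sum is realized as
half the ordered double sum, the summand being symmetric in (x,y). -/
noncomputable def dualGen (k n N : ℕ) (Δ : Finset (Pt k)) (σ : Pt k → ℝ)
    (φ : ↥(Lam k n N) → ℝ) (η : Pt k → ℕ) : ℝ :=
  (1 / 2) * (∑ x : ↥(Lam k n N), ∑ y : ↥(Lam k n N),
      if isNN (x : Pt k) (y : Pt k) then
        (η (x : Pt k) : ℝ) *
            (Dfun k n N Δ σ φ (move η x y) - Dfun k n N Δ σ φ η) +
          (η (y : Pt k) : ℝ) *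
            (Dfun k n N Δ σ φ (move η y x) - Dfun k n N Δ σ φ η)
      else 0) +
    ∑ x : ↥(Lam k n N), ∑ y ∈ Δ.filter (fun y => isNN (x : Pt k) y),
      (η (x : Pt k) : ℝ) *
        (Dfun k n N Δ σ φ (move η (x : Pt k) y) - Dfun k n N Δ σ φ η)


/-! ### Auxiliary material -/

open Polynomial in
lemma derivative_hermite' (n : ℕ) :
    derivative (hermite n : ℤ[X]) = (n : ℤ[X]) * hermite (n - 1) := by
  induction n with
  | zero => simp [hermite]
  | succ t ih =>
    rw [hermite_succ, derivative_sub, derivative_mul, derivative_X, one_mul, ih]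
    cases t with
    | zero => simp
    | succ s =>
      simp only [Nat.add_sub_cancel]
      have hd : derivative ((↑(s+1) : ℤ[X]) * hermite s)
          = (↑(s+1) : ℤ[X]) * derivative (hermite s) := by
        rw [derivative_mul]; simp
      rw [hd]
      have hs := hermite_succ s
      push_cast
      linear_combination (-(s:ℤ[X]) - 1) * hs

open Polynomial in
/-- The Hermite polynomial as a real polynomial. -/
noncomputable def Qh (m : ℕ) : ℝ[X] := (hermite m).map (algebraMap ℤ ℝ)

open Polynomial in
lemma Her_eq (m : ℕ) (ξ : ℝ) : Her m ξ = (Qh m).eval ξ := by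
  simp [Her, Qh, aeval_def, eval₂_eq_eval_map]

open Polynomial in
lemma Qh_deriv (m : ℕ) : derivative (Qh m) = (m : ℝ[X]) * Qh (m - 1) := by
  rw [Qh, derivative_map, derivative_hermite']
  simp [Qh]

open Polynomial in
lemma Qh_deriv_eval (m : ℕ) (a : ℝ) :
    (derivative (Qh m)).eval a = (m : ℝ) * (Qh (m-1)).eval a := by
  rw [Qh_deriv]; simp

open Polynomial in
lemma Qh_deriv2_eval (m : ℕ) (a : ℝ) :
    (derivative (derivative (Qh m))).eval a
      = (m : ℝ) * ((m - 1 : ℕ) : ℝ) * (Qh (m-2)).eval a := by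
  rw [Qh_deriv, derivative_mul]
  simp only [derivative_natCast, zero_mul, zero_add, eval_mul, eval_natCast, Qh_deriv_eval]
  rw [show m - 1 - 1 = m - 2 from by omega]
  ring

open Polynomial in
lemma Qh_recur (m : ℕ) (a : ℝ) :
    (Qh (m+1)).eval a = a * (Qh m).eval a - (m : ℝ) * (Qh (m-1)).eval a := by
  cases m with
  | zero => simp [Qh, hermite_one, hermite]
  | succ t =>
    have h2 : Qh (t+1+1) = X * Qh (t+1) - derivative (Qh (t+1)) := by
      rw [Qh, hermite_succ]
      simp [Qh, Polynomial.map_sub, Polynomial.map_mul, derivative_map]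
    rw [h2]
    simp only [eval_sub, eval_mul, eval_X, Qh_deriv_eval, Nat.add_sub_cancel]

open Polynomial in
lemma Qh_absorb (m : ℕ) (a : ℝ) :
    a * ((m : ℝ) * (Qh (m-1)).eval a)
      = (m : ℝ) * (Qh m).eval a + (m : ℝ) * ((m - 1 : ℕ) : ℝ) * (Qh (m-2)).eval a := by
  cases m with
  | zero => simp
  | succ t =>
    have h := Qh_recur t a
    simp only [Nat.add_sub_cancel]
    rw [show t + 1 - 2 = t - 1 from by omega]
    push_cast
    linear_combination (-(t:ℝ) - 1) * h

section Calculus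

open Polynomial

variable {ι : Type*} [Fintype ι] [DecidableEq ι]

lemma pd_H (x : ι) (φ : ι → ℝ) :
    pd (fun ψ : ι → ℝ => (1/2 : ℝ) * ∑ z, ψ z ^ 2) x φ = φ x := by
  have h : HasFDerivAt (fun ψ : ι → ℝ => ∑ z, ψ z ^ 2)
      (∑ z, (2 * φ z) • (ContinuousLinearMap.proj z : (ι → ℝ) →L[ℝ] ℝ)) φ := by
    apply HasFDerivAt.fun_sum
    intro z _
    have hp : HasDerivAt (fun t : ℝ => t ^ 2) (2 * φ z) (φ z) := by
      simpa using hasDerivAt_pow 2 (φ z)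
    exact hp.comp_hasFDerivAt φ ((ContinuousLinearMap.proj z : (ι → ℝ) →L[ℝ] ℝ).hasFDerivAt)
  rw [pd, (h.const_mul (1/2 : ℝ)).fderiv]
  simp only [ContinuousLinearMap.smul_apply, ContinuousLinearMap.coe_sum',
    Finset.sum_apply, ContinuousLinearMap.proj_apply, smul_eq_mul]
  rw [Finset.sum_eq_single x]
  · simp
  · intro z _ hz; simp [Pi.single_apply, Ne.symm hz]
  · simp

lemma prod_eval_update (q : ι → ℝ[X]) (x : ι) (b : ℝ[X]) (φ : ι → ℝ) :
    ∏ z, (Function.update q x b z).eval (φ z)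
      = b.eval (φ x) * ∏ w ∈ univ.erase x, (q w).eval (φ w) := by
  rw [← Finset.mul_prod_erase univ _ (mem_univ x), Function.update_self]
  congr 1
  exact Finset.prod_congr rfl fun w hw => by
    rw [Function.update_of_ne (Finset.mem_erase.1 hw).1]

lemma pd_cprod (c : ℝ) (q : ι → ℝ[X]) (x : ι) :
    pd (fun ψ : ι → ℝ => c * ∏ z, (q z).eval (ψ z)) x
      = fun φ => c * ∏ z, (Function.update q x (derivative (q x)) z).eval (φ z) := by
  funext φ
  have hprod : HasFDerivAt (fun ψ : ι → ℝ => ∏ z, (q z).eval (ψ z))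
      (∑ z, (∏ w ∈ univ.erase z, (q w).eval (φ w)) •
        (((derivative (q z)).eval (φ z)) • (ContinuousLinearMap.proj z : (ι → ℝ) →L[ℝ] ℝ))) φ := by
    apply HasFDerivAt.finset_prod
    intro z _
    exact ((q z).hasDerivAt (φ z)).comp_hasFDerivAt φ
      ((ContinuousLinearMap.proj z : (ι → ℝ) →L[ℝ] ℝ).hasFDerivAt)
  have h2 := hprod.const_mul c
  rw [pd, h2.fderiv]
  simp only [ContinuousLinearMap.smul_apply, ContinuousLinearMap.coe_sum',
    Finset.sum_apply, ContinuousLinearMap.proj_apply, smul_eq_mul]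
  rw [Finset.sum_eq_single x]
  · rw [prod_eval_update]
    rw [show (Pi.single x 1 : ι → ℝ) x = 1 from Pi.single_eq_same x 1]
    ring
  · intro z _ hz
    simp [Pi.single_apply, Ne.symm hz]
  · simp

lemma prod_split2 (x y : ι) (hxy : x ≠ y) (g : ι → ℝ) :
    ∏ z, g z = g x * (g y * ∏ z ∈ (univ.erase x).erase y, g z) := by
  rw [← Finset.mul_prod_erase univ g (mem_univ x),
      ← Finset.mul_prod_erase (univ.erase x) g
        (Finset.mem_erase.2 ⟨Ne.symm hxy, mem_univ y⟩)]

lemma eval_prod_split (x y : ι) (hxy : x ≠ y) (g q : ι → ℝ[X]) (bx bY : ℝ[X]) (φ : ι → ℝ)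
    (hgx : g x = bx) (hgy : g y = bY) (hg : ∀ z, z ≠ x → z ≠ y → g z = q z) :
    ∏ z, (g z).eval (φ z)
      = bx.eval (φ x) * (bY.eval (φ y) * ∏ z ∈ (univ.erase x).erase y, (q z).eval (φ z)) := by
  rw [prod_split2 x y hxy (fun z => (g z).eval (φ z)), hgx, hgy]
  congr 2
  exact Finset.prod_congr rfl fun z hz => by
    rw [hg z (Finset.mem_erase.1 (Finset.mem_erase.1 hz).2).1 (Finset.mem_erase.1 hz).1]

lemma eval_prod_split1 (x : ι) (g q : ι → ℝ[X]) (bx : ℝ[X]) (φ : ι → ℝ)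
    (hgx : g x = bx) (hg : ∀ z, z ≠ x → g z = q z) :
    ∏ z, (g z).eval (φ z)
      = bx.eval (φ x) * ∏ z ∈ univ.erase x, (q z).eval (φ z) := by
  rw [← Finset.mul_prod_erase univ _ (mem_univ x), hgx]
  congr 1
  exact Finset.prod_congr rfl fun z hz => by rw [hg z (Finset.mem_erase.1 hz).1]

end Calculus

lemma isNN_ne {k : ℕ} {p r : Pt k} (h : isNN p r) : p ≠ r := by
  intro heq
  subst heq
  simp [isNN] at h

lemma coe_ne {k n N : ℕ} {z w : ↥(Lam k n N)} (h : z ≠ w) : (z : Pt k) ≠ (w : Pt k) :=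
  fun hc => h (Subtype.ext hc)

open Polynomial in
lemma pair_eq (k n N : ℕ) (Δ : Finset (Pt k)) (σ : Pt k → ℝ)
    (hΔ : ∀ w ∈ Δ, w ∉ Lam k n N)
    (φ : ↥(Lam k n N) → ℝ) (η : Pt k → ℕ) (x y : ↥(Lam k n N)) (hxy : x ≠ y) :
    Lxy 1 (fun ψ : ↥(Lam k n N) → ℝ => (1 / 2) * ∑ x : ↥(Lam k n N), (ψ x) ^ 2) x y
        (fun ψ => Dfun k n N Δ σ ψ η) φ
      = (η (x : Pt k) : ℝ) * (Dfun k n N Δ σ φ (move η x y) - Dfun k n N Δ σ φ η)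
        + (η (y : Pt k) : ℝ) * (Dfun k n N Δ σ φ (move η y x) - Dfun k n N Δ σ φ η) := by
  classical
  have hxyc : (x : Pt k) ≠ (y : Pt k) := coe_ne hxy
  have hD : (fun ψ : ↥(Lam k n N) → ℝ => Dfun k n N Δ σ ψ η)
      = fun ψ => (∏ w ∈ Δ, σ w ^ η w) *
          ∏ z : ↥(Lam k n N), (Qh (η (z : Pt k))).eval (ψ z) := by
    funext ψ
    simp only [Dfun, Her_eq]
  have hfx : pd (fun ψ : ↥(Lam k n N) → ℝ => Dfun k n N Δ σ ψ η) x
      = fun φ' => (∏ w ∈ Δ, σ w ^ η w) *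
          ∏ z, ((Function.update (fun z : ↥(Lam k n N) => Qh (η (z : Pt k))) x
            (derivative (Qh (η (x : Pt k))))) z).eval (φ' z) := by
    rw [hD]; exact pd_cprod _ _ x
  have hfy : pd (fun ψ : ↥(Lam k n N) → ℝ => Dfun k n N Δ σ ψ η) y
      = fun φ' => (∏ w ∈ Δ, σ w ^ η w) *
          ∏ z, ((Function.update (fun z : ↥(Lam k n N) => Qh (η (z : Pt k))) y
            (derivative (Qh (η (y : Pt k))))) z).eval (φ' z) := by
    rw [hD]; exact pd_cprod _ _ y
  have vx : pd (fun ψ : ↥(Lam k n N) → ℝ => Dfun k n N Δ σ ψ η) x φ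
      = (∏ w ∈ Δ, σ w ^ η w) * ((derivative (Qh (η (x : Pt k)))).eval (φ x) *
          ((Qh (η (y : Pt k))).eval (φ y) *
            ∏ z ∈ (univ.erase x).erase y, (Qh (η (z : Pt k))).eval (φ z))) := by
    simp only [hfx]
    rw [eval_prod_split x y hxy _ (fun z : ↥(Lam k n N) => Qh (η (z : Pt k)))
      (derivative (Qh (η (x : Pt k)))) (Qh (η (y : Pt k))) φ
      (Function.update_self _ _ _) (Function.update_of_ne (Ne.symm hxy) _ _)
      (fun z h1 _ => Function.update_of_ne h1 _ _)]
  have vy : pd (fun ψ : ↥(Lam k n N) → ℝ => Dfun k n N Δ σ ψ η) y φ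
      = (∏ w ∈ Δ, σ w ^ η w) * ((Qh (η (x : Pt k))).eval (φ x) *
          ((derivative (Qh (η (y : Pt k)))).eval (φ y) *
            ∏ z ∈ (univ.erase x).erase y, (Qh (η (z : Pt k))).eval (φ z))) := by
    simp only [hfy]
    rw [eval_prod_split x y hxy _ (fun z : ↥(Lam k n N) => Qh (η (z : Pt k)))
      (Qh (η (x : Pt k))) (derivative (Qh (η (y : Pt k)))) φ
      (Function.update_of_ne hxy _ _) (Function.update_self _ _ _)
      (fun z h1 h2 => Function.update_of_ne h2 _ _)]
  have vxx : pd (pd (fun ψ : ↥(Lam k n N) → ℝ => Dfun k n N Δ σ ψ η) x) x φ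
      = (∏ w ∈ Δ, σ w ^ η w) *
          ((derivative (derivative (Qh (η (x : Pt k))))).eval (φ x) *
          ((Qh (η (y : Pt k))).eval (φ y) *
            ∏ z ∈ (univ.erase x).erase y, (Qh (η (z : Pt k))).eval (φ z))) := by
    simp only [hfx, pd_cprod]
    rw [eval_prod_split x y hxy _ (fun z : ↥(Lam k n N) => Qh (η (z : Pt k)))
      (derivative (derivative (Qh (η (x : Pt k))))) (Qh (η (y : Pt k))) φ
      (by simp) (by rw [Function.update_of_ne (Ne.symm hxy),
        Function.update_of_ne (Ne.symm hxy)])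
      (fun z h1 _ => by rw [Function.update_of_ne h1, Function.update_of_ne h1])]
  have vxy : pd (pd (fun ψ : ↥(Lam k n N) → ℝ => Dfun k n N Δ σ ψ η) x) y φ
      = (∏ w ∈ Δ, σ w ^ η w) *
          ((derivative (Qh (η (x : Pt k)))).eval (φ x) *
          ((derivative (Qh (η (y : Pt k)))).eval (φ y) *
            ∏ z ∈ (univ.erase x).erase y, (Qh (η (z : Pt k))).eval (φ z))) := by
    simp only [hfx, pd_cprod]
    rw [eval_prod_split x y hxy _ (fun z : ↥(Lam k n N) => Qh (η (z : Pt k)))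
      (derivative (Qh (η (x : Pt k)))) (derivative (Qh (η (y : Pt k)))) φ
      (by rw [Function.update_of_ne hxy, Function.update_self])
      (by rw [Function.update_self, Function.update_of_ne (Ne.symm hxy)])
      (fun z h1 h2 => by rw [Function.update_of_ne h2, Function.update_of_ne h1])]
  have vyx : pd (pd (fun ψ : ↥(Lam k n N) → ℝ => Dfun k n N Δ σ ψ η) y) x φ
      = (∏ w ∈ Δ, σ w ^ η w) *
          ((derivative (Qh (η (x : Pt k)))).eval (φ x) *
          ((derivative (Qh (η (y : Pt k)))).eval (φ y) *
            ∏ z ∈ (univ.erase x).erase y, (Qh (η (z : Pt k))).eval (φ z))) := by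
    simp only [hfy, pd_cprod]
    rw [eval_prod_split x y hxy _ (fun z : ↥(Lam k n N) => Qh (η (z : Pt k)))
      (derivative (Qh (η (x : Pt k)))) (derivative (Qh (η (y : Pt k)))) φ
      (by rw [Function.update_self, Function.update_of_ne hxy])
      (by rw [Function.update_of_ne (Ne.symm hxy), Function.update_self])
      (fun z h1 h2 => by rw [Function.update_of_ne h1, Function.update_of_ne h2])]
  have vyy : pd (pd (fun ψ : ↥(Lam k n N) → ℝ => Dfun k n N Δ σ ψ η) y) y φ
      = (∏ w ∈ Δ, σ w ^ η w) * ((Qh (η (x : Pt k))).eval (φ x) *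
          ((derivative (derivative (Qh (η (y : Pt k))))).eval (φ y) *
            ∏ z ∈ (univ.erase x).erase y, (Qh (η (z : Pt k))).eval (φ z))) := by
    simp only [hfy, pd_cprod]
    rw [eval_prod_split x y hxy _ (fun z : ↥(Lam k n N) => Qh (η (z : Pt k)))
      (Qh (η (x : Pt k))) (derivative (derivative (Qh (η (y : Pt k))))) φ
      (by rw [Function.update_of_ne hxy, Function.update_of_ne hxy]) (by simp)
      (fun z h1 h2 => by rw [Function.update_of_ne h2, Function.update_of_ne h2])]
  have vη : Dfun k n N Δ σ φ η
      = (∏ w ∈ Δ, σ w ^ η w) * ((Qh (η (x : Pt k))).eval (φ x) *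
          ((Qh (η (y : Pt k))).eval (φ y) *
            ∏ z ∈ (univ.erase x).erase y, (Qh (η (z : Pt k))).eval (φ z))) := by
    simp only [Dfun, Her_eq]
    rw [eval_prod_split x y hxy _ (fun z : ↥(Lam k n N) => Qh (η (z : Pt k)))
      (Qh (η (x : Pt k))) (Qh (η (y : Pt k))) φ
      rfl rfl (fun _ _ _ => rfl)]
  have vmxy : Dfun k n N Δ σ φ (move η (x : Pt k) (y : Pt k))
      = (∏ w ∈ Δ, σ w ^ η w) * ((Qh (η (x : Pt k) - 1)).eval (φ x) *
          ((Qh (η (y : Pt k) + 1)).eval (φ y) *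
            ∏ z ∈ (univ.erase x).erase y, (Qh (η (z : Pt k))).eval (φ z))) := by
    simp only [Dfun, Her_eq]
    have hσ : ∏ w ∈ Δ, σ w ^ (move η (x : Pt k) (y : Pt k) w) = ∏ w ∈ Δ, σ w ^ η w :=
      Finset.prod_congr rfl fun w hw => by
        have h1 : w ≠ (x : Pt k) := fun h => hΔ w hw (h ▸ x.2)
        have h2 : w ≠ (y : Pt k) := fun h => hΔ w hw (h ▸ y.2)
        simp [move, h1, h2]
    rw [hσ, eval_prod_split x y hxy _ (fun z : ↥(Lam k n N) => Qh (η (z : Pt k)))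
      (Qh (η (x : Pt k) - 1)) (Qh (η (y : Pt k) + 1)) φ
      (by simp [move, hxyc]) (by simp [move])
      (fun z h1 h2 => by simp [move, coe_ne h1, coe_ne h2])]
  have vmyx : Dfun k n N Δ σ φ (move η (y : Pt k) (x : Pt k))
      = (∏ w ∈ Δ, σ w ^ η w) * ((Qh (η (x : Pt k) + 1)).eval (φ x) *
          ((Qh (η (y : Pt k) - 1)).eval (φ y) *
            ∏ z ∈ (univ.erase x).erase y, (Qh (η (z : Pt k))).eval (φ z))) := by
    simp only [Dfun, Her_eq]
    have hσ : ∏ w ∈ Δ, σ w ^ (move η (y : Pt k) (x : Pt k) w) = ∏ w ∈ Δ, σ w ^ η w :=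
      Finset.prod_congr rfl fun w hw => by
        have h1 : w ≠ (x : Pt k) := fun h => hΔ w hw (h ▸ x.2)
        have h2 : w ≠ (y : Pt k) := fun h => hΔ w hw (h ▸ y.2)
        simp [move, h1, h2]
    rw [hσ, eval_prod_split x y hxy _ (fun z : ↥(Lam k n N) => Qh (η (z : Pt k)))
      (Qh (η (x : Pt k) + 1)) (Qh (η (y : Pt k) - 1)) φ
      (by simp [move]) (by simp [move, Ne.symm hxyc])
      (fun z h1 h2 => by simp [move, coe_ne h1, coe_ne h2])]
  simp only [Lxy]
  rw [pd_H x φ, pd_H y φ, vx, vy, vxx, vxy, vyx, vyy, vmxy, vmyx, vη]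
  simp only [Qh_deriv2_eval, Qh_deriv_eval]
  rw [Qh_recur (η (y : Pt k)) (φ y), Qh_recur (η (x : Pt k)) (φ x)]
  have hab := Qh_absorb (η (x : Pt k)) (φ x)
  have hba := Qh_absorb (η (y : Pt k)) (φ y)
  linear_combination
    (-((Qh (η (y : Pt k))).eval (φ y) *
        (∏ z ∈ (univ.erase x).erase y, (Qh (η (z : Pt k))).eval (φ z)) *
        (∏ w ∈ Δ, σ w ^ η w))) * hab +
    (-((Qh (η (x : Pt k))).eval (φ x) *
        (∏ z ∈ (univ.erase x).erase y, (Qh (η (z : Pt k))).eval (φ z)) *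
        (∏ w ∈ Δ, σ w ^ η w))) * hba

open Polynomial in
lemma bdry_eq (k n N : ℕ) (Δ : Finset (Pt k)) (σ : Pt k → ℝ)
    (hΔ : ∀ w ∈ Δ, w ∉ Lam k n N)
    (φ : ↥(Lam k n N) → ℝ) (η : Pt k → ℕ) (x : ↥(Lam k n N)) (y : Pt k) (hy : y ∈ Δ) :
    Lbar 1 (fun ψ : ↥(Lam k n N) → ℝ => (1 / 2) * ∑ x : ↥(Lam k n N), (ψ x) ^ 2) x (σ y)
        (fun ψ => Dfun k n N Δ σ ψ η) φ
      = (η (x : Pt k) : ℝ) *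
          (Dfun k n N Δ σ φ (move η (x : Pt k) y) - Dfun k n N Δ σ φ η) := by
  classical
  have hyx : y ≠ (x : Pt k) := fun h => hΔ y hy (h ▸ x.2)
  have hD : (fun ψ : ↥(Lam k n N) → ℝ => Dfun k n N Δ σ ψ η)
      = fun ψ => (∏ w ∈ Δ, σ w ^ η w) *
          ∏ z : ↥(Lam k n N), (Qh (η (z : Pt k))).eval (ψ z) := by
    funext ψ
    simp only [Dfun, Her_eq]
  have hfx : pd (fun ψ : ↥(Lam k n N) → ℝ => Dfun k n N Δ σ ψ η) x
      = fun φ' => (∏ w ∈ Δ, σ w ^ η w) *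
          ∏ z, ((Function.update (fun z : ↥(Lam k n N) => Qh (η (z : Pt k))) x
            (derivative (Qh (η (x : Pt k))))) z).eval (φ' z) := by
    rw [hD]; exact pd_cprod _ _ x
  have vx : pd (fun ψ : ↥(Lam k n N) → ℝ => Dfun k n N Δ σ ψ η) x φ
      = (∏ w ∈ Δ, σ w ^ η w) * ((derivative (Qh (η (x : Pt k)))).eval (φ x) *
          ∏ z ∈ univ.erase x, (Qh (η (z : Pt k))).eval (φ z)) := by
    simp only [hfx]
    rw [eval_prod_split1 x _ (fun z : ↥(Lam k n N) => Qh (η (z : Pt k)))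
      (derivative (Qh (η (x : Pt k)))) φ
      (Function.update_self _ _ _) (fun z h1 => Function.update_of_ne h1 _ _)]
  have vxx : pd (pd (fun ψ : ↥(Lam k n N) → ℝ => Dfun k n N Δ σ ψ η) x) x φ
      = (∏ w ∈ Δ, σ w ^ η w) *
          ((derivative (derivative (Qh (η (x : Pt k))))).eval (φ x) *
          ∏ z ∈ univ.erase x, (Qh (η (z : Pt k))).eval (φ z)) := by
    simp only [hfx, pd_cprod]
    rw [eval_prod_split1 x _ (fun z : ↥(Lam k n N) => Qh (η (z : Pt k)))
      (derivative (derivative (Qh (η (x : Pt k))))) φ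
      (by simp)
      (fun z h1 => by rw [Function.update_of_ne h1, Function.update_of_ne h1])]
  have vη : Dfun k n N Δ σ φ η
      = (∏ w ∈ Δ, σ w ^ η w) * ((Qh (η (x : Pt k))).eval (φ x) *
          ∏ z ∈ univ.erase x, (Qh (η (z : Pt k))).eval (φ z)) := by
    simp only [Dfun, Her_eq]
    rw [eval_prod_split1 x _ (fun z : ↥(Lam k n N) => Qh (η (z : Pt k)))
      (Qh (η (x : Pt k))) φ rfl (fun _ _ => rfl)]
  have vm : Dfun k n N Δ σ φ (move η (x : Pt k) y)
      = (σ y * ∏ w ∈ Δ, σ w ^ η w) * ((Qh (η (x : Pt k) - 1)).eval (φ x) *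
          ∏ z ∈ univ.erase x, (Qh (η (z : Pt k))).eval (φ z)) := by
    simp only [Dfun, Her_eq]
    have hσ : ∏ w ∈ Δ, σ w ^ (move η (x : Pt k) y w) = σ y * ∏ w ∈ Δ, σ w ^ η w := by
      rw [← Finset.mul_prod_erase Δ (fun w => σ w ^ (move η (x : Pt k) y w)) hy,
          ← Finset.mul_prod_erase Δ (fun w => σ w ^ η w) hy]
      have h1 : ∏ w ∈ Δ.erase y, σ w ^ (move η (x : Pt k) y w)
          = ∏ w ∈ Δ.erase y, σ w ^ η w :=
        Finset.prod_congr rfl fun w hw => by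
          have hwy : w ≠ y := (Finset.mem_erase.1 hw).1
          have hwx : w ≠ (x : Pt k) :=
            fun h => hΔ w (Finset.mem_erase.1 hw).2 (h ▸ x.2)
          simp [move, hwy, hwx]
      rw [h1, show move η ((x : Pt k)) y y = η y + 1 from by simp [move], pow_succ]
      ring
    rw [hσ, eval_prod_split1 x _ (fun z : ↥(Lam k n N) => Qh (η (z : Pt k)))
      (Qh (η (x : Pt k) - 1)) φ
      (by simp [move, Ne.symm hyx])
      (fun z h1 => by
        have hzy : (z : Pt k) ≠ y := fun h => hΔ y hy (h ▸ z.2)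
        simp [move, hzy, coe_ne h1])]
  simp only [Lbar]
  rw [pd_H x φ, vx, vxx, vη, vm]
  simp only [Qh_deriv2_eval, Qh_deriv_eval]
  linear_combination
    (-((∏ z ∈ univ.erase x, (Qh (η (z : Pt k))).eval (φ z)) * (∏ w ∈ Δ, σ w ^ η w))) *
      Qh_absorb (η (x : Pt k)) (φ x)

set_option maxHeartbeats 1000000 in
theorem quadratic_duality' (k n N : ℕ) (hn : 1 ≤ n) (hN : n < N)
    (Δ : Finset (Pt k)) (hΔS : Δ ⊆ Sshell k n N) (σ : Pt k → ℝ)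
    (φ : ↥(Lam k n N) → ℝ) (η : Pt k → ℕ) :
    Gen k n N 1 Δ σ (fun ψ => (1 / 2) * ∑ x : ↥(Lam k n N), (ψ x) ^ 2)
        (fun ψ => Dfun k n N Δ σ ψ η) φ =
      dualGen k n N Δ σ φ η := by
  have hΔ : ∀ w ∈ Δ, w ∉ Lam k n N := fun w hw => by
    have := hΔS hw
    rw [Sshell, Finset.mem_sdiff] at this
    exact this.2
  rw [Gen, dualGen]
  refine congrArg₂ (fun A B : ℝ => 1 / 2 * A + B) ?_ ?_
  · refine Finset.sum_congr rfl fun x _ => Finset.sum_congr rfl fun y _ => ?_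
    by_cases h : isNN (x : Pt k) (y : Pt k)
    · rw [if_pos h, if_pos h]
      exact pair_eq k n N Δ σ hΔ φ η x y (fun he => isNN_ne h (by rw [he]))
    · rw [if_neg h, if_neg h]
  · refine Finset.sum_congr rfl fun x _ => Finset.sum_congr rfl fun y hy => ?_
    exact bdry_eq k n N Δ σ hΔ φ η x y (Finset.mem_filter.1 hy).1

/-- Duality for the quadratic Ginzburg–Landau model (β = 1,
H(φ) = ½∑φ_x²): for every configuration φ and every dual particle
configuration η, (L D(·,η))(φ) = (𝓛 D(φ,·))(η). -/
theorem quadratic_duality (k n N : ℕ) (hn : 1 ≤ n) (hN : n < N)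
    (Δ : Finset (Pt k)) (hΔS : Δ ⊆ Sshell k n N) (σ : Pt k → ℝ)
    (φ : ↥(Lam k n N) → ℝ) (η : Pt k → ℕ) :
    Gen k n N 1 Δ σ (fun ψ => (1 / 2) * ∑ x : ↥(Lam k n N), (ψ x) ^ 2)
        (fun ψ => Dfun k n N Δ σ ψ η) φ =
      dualGen k n N Δ σ φ η :=
  quadratic_duality' k n N hn hN Δ hΔS σ φ η
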